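/- (Decoding theorem.) Let S be a probability measure on ℝ^K with finite second moment, u : ℝ^K → ℝ^D a measurable encoder, and v : ℝ^D → ℝ^K a decoder that is Lipschitz with constant L ≥ 0. Let P be a probability measure on ℝ^D and g : ℝ^D → ℝ^D a measurable map such that W₂²(g_*P, u_*S) ≤ ε for some ε ≥ 0. Assume g_*P, u_*S and (v∘g)_*P have finite second moments and ∫ ‖s − v(u(s))‖² dS(s) < ∞. Then √(W₂²((v∘g)_*P, S)) ≤ L·√ε + √((1/2) ∫ ‖s − v(u(s))‖² dS(s)). -/

import Mathlib

open MeasureTheory ENNReal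
open scoped RealInnerProductSpace

/-- Squared Wasserstein-2 distance: infimum over couplings of `∫ ‖x - y‖² / 2`. -/
noncomputable def W2sq {E : Type*} [NormedAddCommGroup E] [MeasurableSpace E]
    (μ ν : Measure E) : ℝ≥0∞ :=
  ⨅ (π : Measure (E × E)) (_ : IsProbabilityMeasure π)
    (_ : π.map Prod.fst = μ) (_ : π.map Prod.snd = ν),
    ∫⁻ p, ENNReal.ofReal (‖p.1 - p.2‖ ^ 2 / 2) ∂π

open ProbabilityTheory

private lemma sq_rpow_half' (x : ℝ≥0∞) : (x ^ (1/2 : ℝ)) ^ 2 = x := by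
  rw [← ENNReal.rpow_natCast _ 2, ← ENNReal.rpow_mul]; norm_num

private lemma rpow_half_sq' (x : ℝ≥0∞) : (x ^ 2) ^ (1/2 : ℝ) = x := by
  rw [← ENNReal.rpow_natCast _ 2, ← ENNReal.rpow_mul]; norm_num

/-- Decoding theorem: `√W₂²((v∘g)_*P, S) ≤ L√ε + √((1/2)·reconstruction loss)`,
stated in the equivalent squared form. -/
theorem decoding_theorem {K D : ℕ}
    (S : Measure (EuclideanSpace ℝ (Fin K))) [IsProbabilityMeasure S]
    (hS2 : Integrable (fun s => ‖s‖ ^ 2) S)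
    (u : EuclideanSpace ℝ (Fin K) → EuclideanSpace ℝ (Fin D)) (hu : Measurable u)
    (v : EuclideanSpace ℝ (Fin D) → EuclideanSpace ℝ (Fin K))
    (L : ℝ) (hL : 0 ≤ L)
    (hv : ∀ a b, dist (v a) (v b) ≤ L * dist a b)
    (P : Measure (EuclideanSpace ℝ (Fin D))) [IsProbabilityMeasure P]
    (g : EuclideanSpace ℝ (Fin D) → EuclideanSpace ℝ (Fin D)) (hg : Measurable g)
    (ε : ℝ) (hε : 0 ≤ ε)
    (hW : W2sq (P.map g) (S.map u) ≤ ENNReal.ofReal ε)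
    (h1 : Integrable (fun x => ‖x‖ ^ 2) (P.map g))
    (h2 : Integrable (fun x => ‖x‖ ^ 2) (S.map u))
    (h3 : Integrable (fun s => ‖s‖ ^ 2) (P.map (v ∘ g)))
    (hrec : Integrable (fun s => ‖s - v (u s)‖ ^ 2) S) :
    W2sq (P.map (v ∘ g)) S ≤
      ENNReal.ofReal ((L * Real.sqrt ε
        + Real.sqrt (1 / 2 * ∫ s, ‖s - v (u s)‖ ^ 2 ∂S)) ^ 2) := by
  have hvm : Measurable v :=
    (LipschitzWith.of_dist_le_mul (K := ⟨L, hL⟩) (fun a b => hv a b)).continuous.measurable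
  set I : ℝ := ∫ s, ‖s - v (u s)‖ ^ 2 ∂S with hIdef
  have hI0 : 0 ≤ I := integral_nonneg fun s => sq_nonneg _
  -- the "pair" measure τ and its disintegration kernel
  have hpair : Measurable fun s : EuclideanSpace ℝ (Fin K) => (u s, s) :=
    hu.prodMk measurable_id
  set τ : Measure (EuclideanSpace ℝ (Fin D) × EuclideanSpace ℝ (Fin K)) :=
    S.map (fun s => (u s, s)) with hτdef
  haveI : IsProbabilityMeasure τ := Measure.isProbabilityMeasure_map hpair.aemeasurable
  haveI : IsProbabilityMeasure (S.map u) := Measure.isProbabilityMeasure_map hu.aemeasurable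
  set κ := τ.condKernel with hκdef
  have hτfst : τ.fst = S.map u := by
    rw [Measure.fst, hτdef, Measure.map_map measurable_fst hpair]
    rfl
  have hdis : (S.map u) ⊗ₘ κ = τ := by
    rw [← hτfst]; exact τ.disintegrate κ
  -- key estimate for an arbitrary coupling π of g_*P and u_*S
  have key : ∀ π : Measure (EuclideanSpace ℝ (Fin D) × EuclideanSpace ℝ (Fin D)),
      IsProbabilityMeasure π → π.map Prod.fst = P.map g → π.map Prod.snd = S.map u →
      W2sq (P.map (v ∘ g)) S ≤
        2⁻¹ * (ENNReal.ofReal L *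
            (2 * ∫⁻ p, ENNReal.ofReal (‖p.1 - p.2‖ ^ 2 / 2) ∂π) ^ (1/2 : ℝ)
          + ENNReal.ofReal I ^ (1/2 : ℝ)) ^ 2 := by
    intro π hπprob hπ1 hπ2
    haveI := hπprob
    set κ' := κ.comap Prod.snd measurable_snd with hκ'def
    set m := π ⊗ₘ κ' with hmdef
    haveI : IsProbabilityMeasure m := by rw [hmdef]; infer_instance
    have hmf : Measurable fun q :
        (EuclideanSpace ℝ (Fin D) × EuclideanSpace ℝ (Fin D)) × EuclideanSpace ℝ (Fin K) =>
        (q.1.2, q.2) := (measurable_snd.comp measurable_fst).prodMk measurable_snd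
    have hm23 : m.map (fun q => (q.1.2, q.2)) = τ := by
      rw [← hdis]
      ext s hs
      rw [Measure.map_apply hmf hs, hmdef, Measure.compProd_apply (hmf hs),
        Measure.compProd_apply hs, ← hπ2,
        lintegral_map (Kernel.measurable_kernel_prodMk_left hs) measurable_snd]
      simp only [hκ'def, Kernel.comap_apply]
      rfl
    have hπ'meas : Measurable fun q :
        (EuclideanSpace ℝ (Fin D) × EuclideanSpace ℝ (Fin D)) × EuclideanSpace ℝ (Fin K) =>
        (v q.1.1, q.2) := (hvm.comp (measurable_fst.comp measurable_fst)).prodMk measurable_snd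
    set π' := m.map (fun q => (v q.1.1, q.2)) with hπ'def
    haveI : IsProbabilityMeasure π' := Measure.isProbabilityMeasure_map hπ'meas.aemeasurable
    have hmfst : m.map Prod.fst = π := Measure.fst_compProd π κ'
    have hπ'1 : π'.map Prod.fst = P.map (v ∘ g) := by
      rw [hπ'def, Measure.map_map measurable_fst hπ'meas]
      have he : (Prod.fst ∘ fun q :
          (EuclideanSpace ℝ (Fin D) × EuclideanSpace ℝ (Fin D)) × EuclideanSpace ℝ (Fin K) =>
          (v q.1.1, q.2)) = v ∘ (Prod.fst ∘ Prod.fst) := rfl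
      rw [he, ← Measure.map_map hvm (measurable_fst.comp measurable_fst),
        ← Measure.map_map measurable_fst measurable_fst, hmfst, hπ1,
        Measure.map_map hvm hg]
    have hπ'2 : π'.map Prod.snd = S := by
      rw [hπ'def, Measure.map_map measurable_snd hπ'meas]
      have he : (Prod.snd ∘ fun q :
          (EuclideanSpace ℝ (Fin D) × EuclideanSpace ℝ (Fin D)) × EuclideanSpace ℝ (Fin K) =>
          (v q.1.1, q.2)) = Prod.snd ∘ (fun q => (q.1.2, q.2)) := rfl
      rw [he, ← Measure.map_map measurable_snd hmf, hm23, hτdef,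
        Measure.map_map measurable_snd hpair]
      exact Measure.map_id
    set C := ∫⁻ p, ENNReal.ofReal (‖p.1 - p.2‖ ^ 2 / 2) ∂π with hCdef
    -- step 1 : W2sq ≤ cost of π'
    have hstep1 : W2sq (P.map (v ∘ g)) S
        ≤ ∫⁻ p, ENNReal.ofReal (‖p.1 - p.2‖ ^ 2 / 2) ∂π' :=
      iInf_le_of_le π' (iInf_le_of_le ‹IsProbabilityMeasure π'›
        (iInf_le_of_le hπ'1 (iInf_le_of_le hπ'2 le_rfl)))
    have hFmeas : Measurable fun p : EuclideanSpace ℝ (Fin K) × EuclideanSpace ℝ (Fin K) =>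
        ENNReal.ofReal (‖p.1 - p.2‖ ^ 2 / 2) :=
      ENNReal.measurable_ofReal.comp
        (((measurable_fst.sub measurable_snd).norm.pow_const 2).div_const 2)
    have hcost : ∫⁻ p, ENNReal.ofReal (‖p.1 - p.2‖ ^ 2 / 2) ∂π'
        = ∫⁻ q, ENNReal.ofReal (‖v q.1.1 - q.2‖ ^ 2 / 2) ∂m := by
      rw [hπ'def, lintegral_map hFmeas hπ'meas]
    set A : (EuclideanSpace ℝ (Fin D) × EuclideanSpace ℝ (Fin D)) × EuclideanSpace ℝ (Fin K)
        → ℝ≥0∞ := fun q => ENNReal.ofReal (L * ‖q.1.1 - q.1.2‖) with hAdef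
    set B : (EuclideanSpace ℝ (Fin D) × EuclideanSpace ℝ (Fin D)) × EuclideanSpace ℝ (Fin K)
        → ℝ≥0∞ := fun q => ENNReal.ofReal ‖v q.1.2 - q.2‖ with hBdef
    have hAm : Measurable A := by
      apply ENNReal.measurable_ofReal.comp
      exact (measurable_const.mul
        (((measurable_fst.comp measurable_fst).sub (measurable_snd.comp measurable_fst)).norm))
    have hBm : Measurable B := by
      apply ENNReal.measurable_ofReal.comp
      exact ((hvm.comp (measurable_snd.comp measurable_fst)).sub measurable_snd).norm
    -- T_A
    have hTA : ∫⁻ q, A q ^ 2 ∂m = ENNReal.ofReal L ^ 2 * (2 * C) := by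
      have h1 : ∫⁻ q, A q ^ 2 ∂m
          = ∫⁻ p, ENNReal.ofReal (L * ‖p.1 - p.2‖) ^ 2 ∂π := by
        have hfa : Measurable fun p :
            EuclideanSpace ℝ (Fin D) × EuclideanSpace ℝ (Fin D) =>
            ENNReal.ofReal (L * ‖p.1 - p.2‖) ^ 2 :=
          (ENNReal.measurable_ofReal.comp
            (measurable_const.mul ((measurable_fst.sub measurable_snd).norm))).pow_const 2
        rw [← hmfst, lintegral_map hfa measurable_fst]
      rw [h1]
      have h2 : ∀ p : EuclideanSpace ℝ (Fin D) × EuclideanSpace ℝ (Fin D),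
          ENNReal.ofReal (L * ‖p.1 - p.2‖) ^ 2
          = ENNReal.ofReal L ^ 2 * 2 * ENNReal.ofReal (‖p.1 - p.2‖ ^ 2 / 2) := by
        intro p
        rw [ENNReal.ofReal_mul hL, mul_pow, ← ENNReal.ofReal_pow (norm_nonneg _), mul_assoc]
        congr 1
        rw [ENNReal.ofReal_div_of_pos (by norm_num), ENNReal.ofReal_ofNat,
          ENNReal.mul_div_cancel' (by norm_num) (by norm_num)]
      simp_rw [h2]
      rw [lintegral_const_mul' _ _
        (ENNReal.mul_ne_top (ENNReal.pow_ne_top ENNReal.ofReal_ne_top) ofNat_ne_top),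
        hCdef, mul_assoc]
    -- T_B
    have hTB : ∫⁻ q, B q ^ 2 ∂m = ENNReal.ofReal I := by
      have h1 : ∫⁻ q, B q ^ 2 ∂m = ∫⁻ y, ENNReal.ofReal ‖v y.1 - y.2‖ ^ 2 ∂τ := by
        have hfb : Measurable fun y :
            EuclideanSpace ℝ (Fin D) × EuclideanSpace ℝ (Fin K) =>
            ENNReal.ofReal ‖v y.1 - y.2‖ ^ 2 :=
          (ENNReal.measurable_ofReal.comp
            ((hvm.comp measurable_fst).sub measurable_snd).norm).pow_const 2
        rw [← hm23, lintegral_map hfb hmf]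
      have hfb : Measurable fun y :
          EuclideanSpace ℝ (Fin D) × EuclideanSpace ℝ (Fin K) =>
          ENNReal.ofReal ‖v y.1 - y.2‖ ^ 2 :=
        (ENNReal.measurable_ofReal.comp
          ((hvm.comp measurable_fst).sub measurable_snd).norm).pow_const 2
      rw [h1, hτdef, lintegral_map hfb hpair]
      have h3 : ∀ s, ENNReal.ofReal ‖v (u s) - s‖ ^ 2
          = ENNReal.ofReal (‖s - v (u s)‖ ^ 2) := by
        intro s; rw [← ENNReal.ofReal_pow (norm_nonneg _), norm_sub_rev]
      simp_rw [h3]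
      rw [← ofReal_integral_eq_lintegral_ofReal hrec
        (Filter.Eventually.of_forall fun s => sq_nonneg _)]
    -- pointwise triangle inequality
    have hFAB : ∀ q, ENNReal.ofReal ‖v q.1.1 - q.2‖ ≤ A q + B q := by
      intro q
      rw [hAdef, hBdef]
      rw [← ENNReal.ofReal_add (mul_nonneg hL (norm_nonneg _)) (norm_nonneg _)]
      apply ENNReal.ofReal_le_ofReal
      have t1 : ‖v q.1.1 - q.2‖ ≤ ‖v q.1.1 - v q.1.2‖ + ‖v q.1.2 - q.2‖ := by
        simpa [dist_eq_norm] using dist_triangle (v q.1.1) (v q.1.2) q.2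
      have t2 : ‖v q.1.1 - v q.1.2‖ ≤ L * ‖q.1.1 - q.1.2‖ := by
        simpa [dist_eq_norm] using hv q.1.1 q.1.2
      linarith
    -- Minkowski
    have hrpow2 : ∀ x : ℝ≥0∞, x ^ (2:ℝ) = x ^ 2 := fun x => by
      rw [← ENNReal.rpow_natCast x 2]; norm_num
    have hmink : (∫⁻ q, (A q + B q) ^ 2 ∂m) ^ (1/2 : ℝ)
        ≤ (∫⁻ q, A q ^ 2 ∂m) ^ (1/2 : ℝ) + (∫⁻ q, B q ^ 2 ∂m) ^ (1/2 : ℝ) := by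
      have := ENNReal.lintegral_Lp_add_le (μ := m) (p := 2) hAm.aemeasurable hBm.aemeasurable
        one_le_two
      simp_rw [hrpow2, Pi.add_apply] at this
      convert this using 2 <;> norm_num
    calc W2sq (P.map (v ∘ g)) S
        ≤ ∫⁻ p, ENNReal.ofReal (‖p.1 - p.2‖ ^ 2 / 2) ∂π' := hstep1
      _ = ∫⁻ q, ENNReal.ofReal (‖v q.1.1 - q.2‖ ^ 2 / 2) ∂m := hcost
      _ = 2⁻¹ * ∫⁻ q, ENNReal.ofReal ‖v q.1.1 - q.2‖ ^ 2 ∂m := by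
          rw [← lintegral_const_mul' _ _ (ENNReal.inv_ne_top.mpr (by norm_num))]
          congr 1; funext q
          rw [← ENNReal.ofReal_pow (norm_nonneg _), ENNReal.ofReal_div_of_pos (by norm_num),
            ENNReal.ofReal_ofNat, ENNReal.div_eq_inv_mul]
      _ ≤ 2⁻¹ * ∫⁻ q, (A q + B q) ^ 2 ∂m := by
          gcongr with q
          exact hFAB q
      _ ≤ 2⁻¹ * ((∫⁻ q, A q ^ 2 ∂m) ^ (1/2 : ℝ) + (∫⁻ q, B q ^ 2 ∂m) ^ (1/2 : ℝ)) ^ 2 := by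
          gcongr
          have := pow_le_pow_left₀ zero_le hmink 2
          rwa [sq_rpow_half'] at this
      _ = 2⁻¹ * (ENNReal.ofReal L * (2 * C) ^ (1/2 : ℝ) + ENNReal.ofReal I ^ (1/2 : ℝ)) ^ 2 := by
          rw [hTA, hTB, ENNReal.mul_rpow_of_nonneg _ _ (by norm_num), rpow_half_sq']
  -- now the limiting argument
  refine ENNReal.le_of_forall_pos_le_add fun η hη _ => ?_
  -- continuity of the real bound function at 0
  have h2I : Real.sqrt 2 * Real.sqrt (1/2 * I) = Real.sqrt I := by
    rw [← Real.sqrt_mul (by norm_num : (0:ℝ) ≤ 2)]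
    congr 1; ring
  have hf0 : 2⁻¹ * (L * Real.sqrt (2*(ε+0)) + Real.sqrt I)^2
      = (L * Real.sqrt ε + Real.sqrt (1/2 * I))^2 := by
    rw [add_zero, Real.sqrt_mul (by norm_num : (0:ℝ) ≤ 2), ← h2I]
    have h2 : Real.sqrt 2 ^ 2 = 2 := Real.sq_sqrt (by norm_num)
    linear_combination (2⁻¹ * (L * Real.sqrt ε + Real.sqrt (1/2 * I))^2) * h2
  have hcont : ContinuousAt (fun d : ℝ => 2⁻¹ * (L * Real.sqrt (2*(ε+d)) + Real.sqrt I)^2) 0 := by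
    fun_prop
  obtain ⟨δ, hδpos, hδ⟩ : ∃ δ > 0, 2⁻¹ * (L * Real.sqrt (2*(ε+δ)) + Real.sqrt I)^2
      ≤ (L * Real.sqrt ε + Real.sqrt (1/2 * I))^2 + (η : ℝ) := by
    have h := hcont.tendsto
    rw [Metric.tendsto_nhds_nhds] at h
    obtain ⟨δ, hδ, h⟩ := h (η : ℝ) (by exact_mod_cast hη)
    refine ⟨δ/2, by positivity, ?_⟩
    have hd : dist (δ/2 : ℝ) 0 < δ := by
      rw [Real.dist_eq, sub_zero, abs_of_pos (by positivity)]; linarith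
    have := h hd
    rw [Real.dist_eq, hf0] at this
    have := abs_sub_lt_iff.mp this
    linarith [this.1]
  -- extract a near-optimal coupling
  have hlt : W2sq (P.map g) (S.map u) < ENNReal.ofReal ε + ENNReal.ofReal δ :=
    lt_of_le_of_lt hW (ENNReal.lt_add_right ENNReal.ofReal_ne_top
      ((ENNReal.ofReal_pos.mpr hδpos).ne'))
  unfold W2sq at hlt
  simp only [iInf_lt_iff] at hlt
  obtain ⟨π, hπprob, hπ1, hπ2, hπC⟩ := hlt
  have hC' : (∫⁻ p, ENNReal.ofReal (‖p.1 - p.2‖ ^ 2 / 2) ∂π) ≤ ENNReal.ofReal (ε + δ) := by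
    rw [ENNReal.ofReal_add hε hδpos.le]; exact hπC.le
  calc W2sq (P.map (v ∘ g)) S
      ≤ 2⁻¹ * (ENNReal.ofReal L *
          (2 * ∫⁻ p, ENNReal.ofReal (‖p.1 - p.2‖ ^ 2 / 2) ∂π) ^ (1/2 : ℝ)
        + ENNReal.ofReal I ^ (1/2 : ℝ)) ^ 2 := key π hπprob hπ1 hπ2
    _ ≤ 2⁻¹ * (ENNReal.ofReal L * (2 * ENNReal.ofReal (ε+δ)) ^ (1/2 : ℝ)
        + ENNReal.ofReal I ^ (1/2 : ℝ)) ^ 2 := by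
        gcongr
    _ = ENNReal.ofReal (2⁻¹ * (L * Real.sqrt (2*(ε+δ)) + Real.sqrt I)^2) := by
        have e1 : (2 : ℝ≥0∞) * ENNReal.ofReal (ε+δ) = ENNReal.ofReal (2*(ε+δ)) := by
          rw [ENNReal.ofReal_mul (by norm_num : (0:ℝ) ≤ 2), ENNReal.ofReal_ofNat]
        have e2 : ENNReal.ofReal (2*(ε+δ)) ^ (1/2:ℝ)
            = ENNReal.ofReal (Real.sqrt (2*(ε+δ))) := by
          rw [ENNReal.ofReal_rpow_of_nonneg (by positivity) (by norm_num), ← Real.sqrt_eq_rpow]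
        have e3 : ENNReal.ofReal I ^ (1/2:ℝ) = ENNReal.ofReal (Real.sqrt I) := by
          rw [ENNReal.ofReal_rpow_of_nonneg hI0 (by norm_num), ← Real.sqrt_eq_rpow]
        have e4 : (2⁻¹ : ℝ≥0∞) = ENNReal.ofReal 2⁻¹ := by
          rw [ENNReal.ofReal_inv_of_pos (by norm_num), ENNReal.ofReal_ofNat]
        rw [e1, e2, e3, e4, ← ENNReal.ofReal_mul hL,
          ← ENNReal.ofReal_add (mul_nonneg hL (Real.sqrt_nonneg _)) (Real.sqrt_nonneg _),
          ← ENNReal.ofReal_pow (by positivity),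
          ← ENNReal.ofReal_mul (by norm_num)]
    _ ≤ ENNReal.ofReal ((L * Real.sqrt ε + Real.sqrt (1/2 * I))^2 + (η : ℝ)) :=
        ENNReal.ofReal_le_ofReal hδ
    _ = ENNReal.ofReal ((L * Real.sqrt ε + Real.sqrt (1/2 * I))^2) + η := by
        rw [ENNReal.ofReal_add (by positivity) η.coe_nonneg, ENNReal.ofReal_coe_nnreal]
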